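/- Pinching inequality: let σ be a density matrix on a finite-dimensional Hilbert space with spectral decomposition σ = ∑_i λ_i P_i into v distinct eigenvalues with spectral projections P_i, and define the pinching map E_σ(ρ) = ∑_i P_i ρ P_i. Then for every density matrix ρ, ρ ≼ v · E_σ(ρ) in the Loewner order. -/

import Mathlib

open scoped ComplexOrder
open Matrix
open scoped MatrixOrder

/-- The pinching map associated with projections `P i`: `E(ρ) = ∑ i, P i ρ P i`. -/
noncomputable def pinch {d v : ℕ} (P : Fin v → Matrix (Fin d) (Fin d) ℂ)
    (ρ : Matrix (Fin d) (Fin d) ℂ) : Matrix (Fin d) (Fin d) ℂ :=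
  ∑ i, P i * ρ * P i

lemma sum_mulVec' {d : ℕ} {I : Type*} (s : Finset I) (M : I → Matrix (Fin d) (Fin d) ℂ)
    (x : Fin d → ℂ) : (∑ i ∈ s, M i).mulVec x = ∑ i ∈ s, (M i).mulVec x :=
  map_sum (Matrix.mulVec.addMonoidHomLeft x) M s

lemma dotProduct_sum' {d : ℕ} {I : Type*} (s : Finset I) (w : I → (Fin d → ℂ))
    (x : Fin d → ℂ) : x ⬝ᵥ (∑ i ∈ s, w i) = ∑ i ∈ s, x ⬝ᵥ w i := by
  simp only [dotProduct, Finset.sum_apply, Finset.mul_sum]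
  exact Finset.sum_comm

lemma star_dot_self_eq {d : ℕ} (w : Fin d → ℂ) :
    star w ⬝ᵥ w = ((∑ j, ‖w j‖ ^ 2 : ℝ) : ℂ) := by
  push_cast
  simp only [dotProduct, Pi.star_apply, Complex.star_def]
  refine Finset.sum_congr rfl fun j _ => ?_
  rw [mul_comm, Complex.mul_conj]
  rw [Complex.normSq_eq_norm_sq]
  norm_cast

-- aux: quadratic form through a hermitian square root
lemma quad_sqrt {d : ℕ} {ρ : Matrix (Fin d) (Fin d) ℂ} (hρ : ρ.PosSemidef)
    (y : Fin d → ℂ) :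
    star y ⬝ᵥ ρ.mulVec y = star ((CFC.sqrt ρ).mulVec y) ⬝ᵥ ((CFC.sqrt ρ).mulVec y) := by
  conv_lhs => rw [← CFC.sqrt_mul_sqrt_self ρ hρ.nonneg]
  rw [star_mulVec, (CFC.sqrt_nonneg ρ).posSemidef.1, dotProduct_mulVec, ← vecMul_vecMul,
    ← dotProduct_mulVec]

/-- Hayashi's pinching inequality: if `σ = ∑ i, λ i • P i` is the spectral decomposition of a
density matrix into `v` distinct eigenvalues with spectral projections `P i`, then
`ρ ≼ v • E_σ(ρ)` for every density matrix `ρ`. -/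
theorem pinching_inequality {d v : ℕ}
    (P : Fin v → Matrix (Fin d) (Fin d) ℂ) (lam : Fin v → ℝ)
    (hP_herm : ∀ i, (P i).IsHermitian)
    (hP_proj : ∀ i, P i * P i = P i)
    (hP_orth : ∀ i j, i ≠ j → P i * P j = 0)
    (hP_sum : ∑ i, P i = 1)
    (hlam_inj : Function.Injective lam)
    (σ : Matrix (Fin d) (Fin d) ℂ)
    (hσ : σ = ∑ i, (lam i : ℂ) • P i)
    (hσ_psd : σ.PosSemidef) (hσ_tr : σ.trace = 1)
    (ρ : Matrix (Fin d) (Fin d) ℂ) (hρ : ρ.PosSemidef) (hρ_tr : ρ.trace = 1) :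
    ((v : ℂ) • pinch P ρ - ρ).PosSemidef := by
  classical
  set S := CFC.sqrt ρ with hS
  have hSh : S.IsHermitian := (CFC.sqrt_nonneg ρ).posSemidef.1
  -- pinch is PSD hence Hermitian
  have hpinch_psd : (pinch P ρ).PosSemidef := by
    unfold pinch
    refine Finset.sum_induction _ _ (fun a b ha hb => ha.add hb) .zero (fun i _ => ?_)
    have := hρ.conjTranspose_mul_mul_same (P i)
    rwa [(hP_herm i).eq] at this
  refine Matrix.posSemidef_iff_dotProduct_mulVec.mpr ⟨?_, ?_⟩
  · have h1 := hpinch_psd.1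
    simp only [Matrix.IsHermitian, Matrix.conjTranspose_sub, Matrix.conjTranspose_smul,
      hρ.1.eq, h1.eq, Complex.star_def, Complex.conj_natCast]
  intro x
  set u : Fin v → (Fin d → ℂ) := fun i => S.mulVec ((P i).mulVec x) with hu
  -- sum of the u i is S *ᵥ x
  have hsum_u : ∑ i, u i = S.mulVec x := by
    simp only [hu, Matrix.mulVec_mulVec, ← sum_mulVec', ← Finset.mul_sum, hP_sum, mul_one]
  -- quadratic form of ρ
  have h1 : star x ⬝ᵥ ρ.mulVec x = star (∑ i, u i) ⬝ᵥ (∑ i, u i) := by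
    rw [hsum_u]; exact quad_sqrt hρ x
  -- quadratic form of pinch
  have h2 : star x ⬝ᵥ (pinch P ρ).mulVec x = ∑ i, star (u i) ⬝ᵥ u i := by
    unfold pinch
    rw [sum_mulVec', dotProduct_sum']
    refine Finset.sum_congr rfl fun i _ => ?_
    have : star x ⬝ᵥ (P i * ρ * P i).mulVec x
        = star ((P i).mulVec x) ⬝ᵥ ρ.mulVec ((P i).mulVec x) := by
      rw [Matrix.star_mulVec, (hP_herm i).eq]
      simp only [Matrix.dotProduct_mulVec, Matrix.vecMul_vecMul, Matrix.mul_assoc]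
    rw [this, quad_sqrt hρ]
  -- pass to real norms via Euclidean space
  set f : Fin v → EuclideanSpace ℂ (Fin d) := fun i => (WithLp.equiv 2 _).symm (u i) with hf
  have hnorm : ∀ i, star (u i) ⬝ᵥ u i = ((‖f i‖ ^ 2 : ℝ) : ℂ) := by
    intro i
    rw [star_dot_self_eq, EuclideanSpace.norm_eq, Real.sq_sqrt (by positivity)]
    rfl
  have hnormS : star (∑ i, u i) ⬝ᵥ (∑ i, u i) = ((‖∑ i, f i‖ ^ 2 : ℝ) : ℂ) := by
    have hfs : ∑ i, f i = (WithLp.equiv 2 _).symm (∑ i, u i) := by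
      simp only [hf]
      exact (map_sum (WithLp.linearEquiv 2 ℂ (Fin d → ℂ)).symm u Finset.univ).symm
    rw [hfs, star_dot_self_eq, EuclideanSpace.norm_eq, Real.sq_sqrt (by positivity)]
    rfl
  -- Cauchy-Schwarz
  have hCS : ‖∑ i, f i‖ ^ 2 ≤ (v : ℝ) * ∑ i, ‖f i‖ ^ 2 := by
    calc ‖∑ i, f i‖ ^ 2 ≤ (∑ i, ‖f i‖) ^ 2 := by
          have := norm_sum_le Finset.univ f
          exact pow_le_pow_left₀ (norm_nonneg _) this 2
      _ ≤ (Finset.univ : Finset (Fin v)).card * ∑ i, ‖f i‖ ^ 2 :=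
          sq_sum_le_card_mul_sum_sq
      _ = (v : ℝ) * ∑ i, ‖f i‖ ^ 2 := by simp
  -- put everything together
  rw [Matrix.sub_mulVec, dotProduct_sub, Matrix.smul_mulVec, dotProduct_smul, h1, h2,
    hnormS]
  have h3 : ∑ i, star (u i) ⬝ᵥ u i = ((∑ i, ‖f i‖ ^ 2 : ℝ) : ℂ) := by
    rw [Complex.ofReal_sum]
    exact Finset.sum_congr rfl fun i _ => hnorm i
  rw [h3, smul_eq_mul]
  have : (v : ℂ) * ((∑ i, ‖f i‖ ^ 2 : ℝ) : ℂ) - ((‖∑ i, f i‖ ^ 2 : ℝ) : ℂ)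
      = (((v : ℝ) * (∑ i, ‖f i‖ ^ 2) - ‖∑ i, f i‖ ^ 2 : ℝ) : ℂ) := by push_cast; ring
  rw [this, Complex.zero_le_real]
  linarith
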